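/- Let V be a complex Hilbert space and let T, Q be bounded selfadjoint operators on V with Q nonnegative. Then for every z ∈ ℂ with Re z ≤ 0 and z ≠ 0, the operator z(I + iT) − Q is boundedly invertible on V and ‖z·(z(I + iT) − Q)⁻¹‖ ≤ 1. -/

import Mathlib

lemma key_bound {V : Type*} [NormedAddCommGroup V] [InnerProductSpace ℂ V] [CompleteSpace V]
    (T Q : V →L[ℂ] V) (hT : IsSelfAdjoint T)
    (hQ : IsSelfAdjoint Q)
    (hQnn : ∀ u : V, 0 ≤ (inner ℂ u (Q u) : ℂ).re)
    (z : ℂ) (hz : z.re ≤ 0) (u : V) :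
    ‖z‖ * ‖u‖ ≤ ‖(z • ((1 : V →L[ℂ] V) + Complex.I • T) - Q) u‖ := by
  set A := z • ((1 : V →L[ℂ] V) + Complex.I • T) - Q with hA
  have him : ∀ (S : V →L[ℂ] V), IsSelfAdjoint S → (inner ℂ u (S u) : ℂ).im = 0 := by
    intro S hS
    have h : (starRingEnd ℂ) (inner ℂ u (S u) : ℂ) = inner ℂ u (S u) := by
      rw [inner_conj_symm]; exact hS.isSymmetric u u
    exact Complex.conj_eq_iff_im.mp h
  set t : ℝ := (inner ℂ u (T u) : ℂ).re with ht
  set q : ℝ := (inner ℂ u (Q u) : ℂ).re with hq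
  have hTu : (inner ℂ u (T u) : ℂ) = (t : ℂ) := by
    rw [ht]; exact (Complex.re_add_im _).symm.trans (by rw [him T hT]; simp)
  have hQu : (inner ℂ u (Q u) : ℂ) = (q : ℂ) := by
    rw [hq]; exact (Complex.re_add_im _).symm.trans (by rw [him Q hQ]; simp)
  have hu : (inner ℂ u u : ℂ) = ((‖u‖ ^ 2 : ℝ) : ℂ) := by
    rw [inner_self_eq_norm_sq_to_K]; norm_cast
  set n : ℝ := ‖u‖ ^ 2 with hn
  have hc : (inner ℂ u (A u) : ℂ) = z * n + z * Complex.I * t - q := by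
    rw [hA]
    simp only [ContinuousLinearMap.sub_apply, ContinuousLinearMap.smul_apply,
      ContinuousLinearMap.add_apply, ContinuousLinearMap.one_apply,
      inner_sub_right, inner_smul_right, inner_add_right]
    rw [hTu, hQu, hu]
    ring
  have hkey : ‖z‖ * n ≤ ‖(inner ℂ u (A u) : ℂ)‖ := by
    have h1 : 0 ≤ n := by positivity
    have h2 : 0 ≤ q := hQnn u
    have hsq : (‖z‖ * n) ^ 2 ≤ ‖(inner ℂ u (A u) : ℂ)‖ ^ 2 := by
      rw [hc]
      have hre : (z * n + z * Complex.I * t - q).re = z.re * n - z.im * t - q := by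
        simp [Complex.mul_re, Complex.mul_im]; ring
      have him' : (z * n + z * Complex.I * t - q).im = z.im * n + z.re * t := by
        simp [Complex.mul_re, Complex.mul_im]
      have hw : ‖z * (n:ℂ) + z * Complex.I * t - q‖ ^ 2
          = (z.re * n - z.im * t - q) ^ 2 + (z.im * n + z.re * t) ^ 2 := by
        rw [Complex.sq_norm, Complex.normSq_apply, hre, him']; ring
      rw [hw]
      have hznorm : ‖z‖ ^ 2 = z.re ^ 2 + z.im ^ 2 := by
        rw [Complex.sq_norm, Complex.normSq_apply]; ring
      have h3 : 0 ≤ (-z.re) * q * n :=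
        mul_nonneg (mul_nonneg (neg_nonneg.mpr hz) h2) h1
      have hzn : (‖z‖ * n) ^ 2 = (z.re ^ 2 + z.im ^ 2) * n ^ 2 := by
        rw [mul_pow, hznorm]
      rw [hzn]
      nlinarith [sq_nonneg (z.im * t + q), sq_nonneg (z.re * t), h3]
    have h4 := Real.sqrt_le_sqrt hsq
    rwa [Real.sqrt_sq (by positivity), Real.sqrt_sq (norm_nonneg _)] at h4
  have hCS := norm_inner_le_norm (𝕜 := ℂ) u (A u)
  rcases eq_or_lt_of_le (norm_nonneg u) with h0 | h0
  · simp [← h0]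
  · have h5 : ‖u‖ * (‖z‖ * ‖u‖) ≤ ‖u‖ * ‖A u‖ := by
      calc ‖u‖ * (‖z‖ * ‖u‖) = ‖z‖ * n := by rw [hn]; ring
        _ ≤ ‖(inner ℂ u (A u) : ℂ)‖ := hkey
        _ ≤ ‖u‖ * ‖A u‖ := hCS
    exact (mul_le_mul_iff_right₀ h0).mp h5

/-- Let `V` be a complex Hilbert space and `T, Q` bounded selfadjoint
operators on `V` with `Q` nonnegative. Then for every `z ∈ ℂ` with `Re z ≤ 0` and
`z ≠ 0`, the operator `z(I + iT) − Q` is boundedly invertible on `V` and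
`‖z·(z(I + iT) − Q)⁻¹‖ ≤ 1`. -/
theorem isUnit_and_norm_inverse_le_one_of_selfAdjoint_nonneg
    {V : Type*} [NormedAddCommGroup V] [InnerProductSpace ℂ V] [CompleteSpace V]
    (T Q : V →L[ℂ] V) (hT : IsSelfAdjoint T) (hQ : IsSelfAdjoint Q)
    (hQnn : ∀ u : V, 0 ≤ (inner ℂ u (Q u) : ℂ).re)
    (z : ℂ) (hz : z.re ≤ 0) (hz0 : z ≠ 0) :
    IsUnit (z • ((1 : V →L[ℂ] V) + Complex.I • T) - Q) ∧
    ‖z • Ring.inverse (z • ((1 : V →L[ℂ] V) + Complex.I • T) - Q)‖ ≤ 1 := by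
  set A := z • ((1 : V →L[ℂ] V) + Complex.I • T) - Q with hA
  have hbound : ∀ u : V, ‖z‖ * ‖u‖ ≤ ‖A u‖ := key_bound T Q hT hQ hQnn z hz
  have hzpos : (0 : ℝ) < ‖z‖ := norm_pos_iff.mpr hz0
  -- adjoint
  have hadj : star A = (starRingEnd ℂ z) • ((1 : V →L[ℂ] V) + Complex.I • (-T)) - Q := by
    rw [hA, star_sub, star_smul, star_add, hQ.star_eq]
    congr 1
    rw [star_one, star_smul, hT.star_eq]
    congr 1
    simp [smul_neg]
  have hQnn' : ∀ u : V, 0 ≤ (inner ℂ u (Q u) : ℂ).re := hQnn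
  have hbound' : ∀ u : V, ‖z‖ * ‖u‖ ≤ ‖(star A) u‖ := by
    intro u
    have := key_bound (-T) Q hT.neg hQ hQnn (starRingEnd ℂ z)
      (by simpa using hz) u
    rw [← hadj] at this
    simpa using this
  -- injectivity
  have hker : LinearMap.ker (A : V →ₗ[ℂ] V) = ⊥ := by
    rw [LinearMap.ker_eq_bot']
    intro u hu
    have := hbound u
    rw [show A u = 0 from hu, norm_zero] at this
    have : ‖u‖ ≤ 0 := by
      by_contra h
      push_neg at h
      nlinarith
    simpa using le_antisymm this (norm_nonneg u)
  -- closed range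
  have hanti : AntilipschitzWith ‖z‖₊⁻¹ A := by
    apply A.antilipschitz_of_bound
    intro x
    rw [NNReal.coe_inv, coe_nnnorm]
    rw [inv_mul_eq_div, le_div_iff₀ hzpos]
    calc ‖x‖ * ‖z‖ = ‖z‖ * ‖x‖ := by ring
      _ ≤ ‖A x‖ := hbound x
  have hclosed : IsClosed (Set.range A) := hanti.isClosed_range A.uniformContinuous
  set R : Submodule ℂ V := LinearMap.range (A : V →ₗ[ℂ] V) with hR
  have hRclosed : IsClosed (R : Set V) := by
    convert hclosed using 1
    exact LinearMap.coe_range (A : V →ₗ[ℂ] V)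
  haveI : CompleteSpace R := hRclosed.completeSpace_coe
  have hrange : R = ⊤ := by
    rw [← Submodule.orthogonal_eq_bot_iff]
    rw [Submodule.eq_bot_iff]
    intro w hw
    have h1 : ∀ x : V, (inner ℂ (A x) w : ℂ) = 0 := by
      intro x
      exact (Submodule.mem_orthogonal R w).mp hw (A x) (LinearMap.mem_range_self _ x)
    have h2 : ContinuousLinearMap.adjoint A w = 0 := by
      have h3 : (inner ℂ (ContinuousLinearMap.adjoint A w) (ContinuousLinearMap.adjoint A w) : ℂ) = 0 := by
        rw [ContinuousLinearMap.adjoint_inner_right]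
        exact h1 _
      exact inner_self_eq_zero.mp h3
    have h4 := hbound' w
    rw [ContinuousLinearMap.star_eq_adjoint, h2, norm_zero] at h4
    have : ‖w‖ ≤ 0 := by nlinarith
    simpa using le_antisymm this (norm_nonneg w)
  -- equivalence
  let e := ContinuousLinearEquiv.ofBijective A hker hrange
  have heA : (e : V →L[ℂ] V) = A := rfl
  have hmul1 : A * (e.symm : V →L[ℂ] V) = 1 := by
    ext x
    simp only [ContinuousLinearMap.mul_apply, ContinuousLinearMap.one_apply]
    rw [← heA]
    exact e.apply_symm_apply x
  have hmul2 : (e.symm : V →L[ℂ] V) * A = 1 := by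
    ext x
    simp only [ContinuousLinearMap.mul_apply, ContinuousLinearMap.one_apply]
    rw [← heA]
    exact e.symm_apply_apply x
  let U : (V →L[ℂ] V)ˣ := ⟨A, (e.symm : V →L[ℂ] V), hmul1, hmul2⟩
  have hunit : IsUnit A := ⟨U, rfl⟩
  refine ⟨hunit, ?_⟩
  have hinv : Ring.inverse A = (e.symm : V →L[ℂ] V) := by
    rw [show A = (U : V →L[ℂ] V) from rfl, Ring.inverse_unit]
    rfl
  rw [hinv]
  apply ContinuousLinearMap.opNorm_le_bound _ zero_le_one
  intro v
  rw [one_mul, ContinuousLinearMap.smul_apply, norm_smul]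
  have h5 := hbound (e.symm v)
  have h6 : A (e.symm v) = v := by rw [← heA]; exact e.apply_symm_apply v
  rw [h6] at h5
  exact h5
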